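/- Let A be a commutative ring, p a prime number, and 𝔞 an ideal of A. Set 𝔟 := pA + 𝔞. Then for every i ≥ 1 one has the inclusions of ideals 𝔟^{2i−1}·𝔞 ⊆ p^i𝔞 + 𝔞^{i+1} ⊆ 𝔟^i·𝔞, where p^i𝔞 denotes the ideal {p^i·x : x ∈ 𝔞} generated by p^i-multiples of elements of 𝔞. Consequently the two decreasing chains of ideals (𝔟^i𝔞)_{i} and (p^i𝔞 + 𝔞^{i+1})_{i} are mutually cofinal and define the same linear topology on A. -/

import Mathlib

lemma finset_sup_mul_le {A : Type*} [CommRing A] {ι : Type*} {s : Finset ι}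
    {f : ι → Ideal A} {J K : Ideal A} (h : ∀ i ∈ s, f i * J ≤ K) : s.sup f * J ≤ K := by
  induction s using Finset.cons_induction with
  | empty => simp
  | cons a s ha ih =>
    rw [Finset.sup_cons, Ideal.sup_mul]
    exact sup_le (h a (Finset.mem_cons_self a s)) (ih fun i hi => h i (Finset.mem_cons_of_mem hi))

lemma aux_pow_mul_le {A : Type*} [CommRing A] (I J : Ideal A) (n m : ℕ) :
    (I + J) ^ (n + m) * J ≤ I ^ n * J + J ^ (m + 2) := by
  rw [add_pow, Ideal.sum_eq_sup]
  apply finset_sup_mul_le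
  intro k hk
  by_cases hn : n ≤ k
  · refine le_trans ?_ le_sup_left
    exact Ideal.mul_mono ((Ideal.mul_le_left.trans Ideal.mul_le_left).trans
      (Ideal.pow_le_pow_right hn)) le_rfl
  · refine le_trans ?_ le_sup_right
    have h1 : I ^ k * J ^ (n + m - k) * (n + m).choose k ≤ J ^ (n + m - k) :=
      Ideal.mul_le_left.trans Ideal.mul_le_right
    calc I ^ k * J ^ (n + m - k) * (n + m).choose k * J
        ≤ J ^ (n + m - k) * J := Ideal.mul_mono h1 le_rfl
      _ = J ^ (n + m - k + 1) := (pow_succ J _).symm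
      _ ≤ J ^ (m + 2) := Ideal.pow_le_pow_right (by omega)

lemma aux_right {A : Type*} [CommRing A] (p : ℕ) (𝔞 𝔟 : Ideal A)
    (h𝔟 : 𝔟 = Ideal.span {(p : A)} + 𝔞) (i : ℕ) :
    Ideal.span {(p : A)} ^ i * 𝔞 + 𝔞 ^ (i + 1) ≤ 𝔟 ^ i * 𝔞 := by
  apply sup_le
  · exact Ideal.mul_mono (Ideal.pow_right_mono (by rw [h𝔟]; exact le_sup_left) i) le_rfl
  · rw [pow_succ]
    exact Ideal.mul_mono (Ideal.pow_right_mono (by rw [h𝔟]; exact le_sup_right) i) le_rfl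

lemma aux_left {A : Type*} [CommRing A] (p : ℕ) (𝔞 𝔟 : Ideal A)
    (h𝔟 : 𝔟 = Ideal.span {(p : A)} + 𝔞) (i : ℕ) (hi : 1 ≤ i) :
    𝔟 ^ (2 * i - 1) * 𝔞 ≤ Ideal.span {(p : A)} ^ i * 𝔞 + 𝔞 ^ (i + 1) := by
  have h1 : 2 * i - 1 = i + (i - 1) := by omega
  have h2 : (i - 1) + 2 = i + 1 := by omega
  rw [h𝔟, h1]
  have := aux_pow_mul_le (Ideal.span {(p : A)}) 𝔞 i (i - 1)
  rwa [h2] at this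

/-- Let `𝔞` be an ideal of `A`, `p` a prime and `𝔟 = pA + 𝔞`. Then for every `i ≥ 1`,
`𝔟^{2i−1}·𝔞 ⊆ p^i𝔞 + 𝔞^{i+1} ⊆ 𝔟^i·𝔞`; consequently the chains `(𝔟^i𝔞)` and
`(p^i𝔞 + 𝔞^{i+1})` are mutually cofinal. -/
theorem stmt2 (A : Type*) [CommRing A] (p : ℕ) (hp : p.Prime) (𝔞 𝔟 : Ideal A)
    (h𝔟 : 𝔟 = Ideal.span {(p : A)} + 𝔞) :
    (∀ i : ℕ, 1 ≤ i →
      𝔟 ^ (2 * i - 1) * 𝔞 ≤ Ideal.span {(p : A)} ^ i * 𝔞 + 𝔞 ^ (i + 1) ∧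
      Ideal.span {(p : A)} ^ i * 𝔞 + 𝔞 ^ (i + 1) ≤ 𝔟 ^ i * 𝔞) ∧
    (∀ i : ℕ, ∃ j : ℕ, 𝔟 ^ j * 𝔞 ≤ Ideal.span {(p : A)} ^ i * 𝔞 + 𝔞 ^ (i + 1)) ∧
    (∀ i : ℕ, ∃ j : ℕ, Ideal.span {(p : A)} ^ j * 𝔞 + 𝔞 ^ (j + 1) ≤ 𝔟 ^ i * 𝔞) := by
  refine ⟨fun i hi => ⟨aux_left p 𝔞 𝔟 h𝔟 i hi, aux_right p 𝔞 𝔟 h𝔟 i⟩, fun i => ?_,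
    fun i => ⟨i, aux_right p 𝔞 𝔟 h𝔟 i⟩⟩
  rcases Nat.eq_zero_or_pos i with rfl | hi
  · exact ⟨0, by simpa using sup_le le_rfl (Ideal.mul_le_left : 𝔞 * 𝔞 ≤ 𝔞)⟩
  · exact ⟨2 * i - 1, aux_left p 𝔞 𝔟 h𝔟 i hi⟩
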